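/- Let A, B, B', C, C' be complex-valued multiplicative characters of a finite field F_q with q elements, let x, y ∈ F_q with x ≠ 1, and let t ∈ F_q with t ≠ 1. Then (1/(q-1))·Σ_θ {BC̄θ choose θ}·F₂(A;Bθ,B';C,C';x,y)·θ(t) = ε(t)·B̄(1-t)·F₂(A;B,B';C,C'; x/(1-t), y) - (B̄C)(-t)·ε(x)·Ā(1-x)·₂F₁(A,B';C' | y/(1-x)), where the sum on the left runs over all multiplicative characters θ of F_q. -/

import Mathlib

open Finset

noncomputable instance {F : Type*} [Field F] [Fintype F] : Fintype (MulChar F ℂ) :=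
  Fintype.ofFinite _

/-- Finite-field binomial coefficient `{A choose B} = B(-1) · J(A, B̄)`,
where `J(χ,λ) = ∑_u χ(u)·λ(1-u)` is the Jacobi sum. -/
noncomputable def binom {F : Type*} [Field F] [Fintype F] (A B : MulChar F ℂ) : ℂ :=
  B (-1) * ∑ u : F, A u * B⁻¹ (1 - u)

/-- Finite-field Gauss hypergeometric series
`₂F₁(A,B;C|x) = ε(x)·(BC)(-1)·∑_y B(y)·(B̄C)(1-y)·Ā(1-xy)`. -/
noncomputable def gauss2F1 {F : Type*} [Field F] [Fintype F]
    (A B C : MulChar F ℂ) (x : F) : ℂ :=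
  (1 : MulChar F ℂ) x * (B * C) (-1) *
    ∑ y : F, B y * (B⁻¹ * C) (1 - y) * A⁻¹ (1 - x * y)

/-- Finite-field `₃F₂` hypergeometric series. -/
noncomputable def hyper3F2 {F : Type*} [Field F] [Fintype F]
    (A₀ A₁ A₂ B₁ B₂ : MulChar F ℂ) (x : F) : ℂ :=
  ((Fintype.card F : ℂ) - 1)⁻¹ *
    ∑ χ : MulChar F ℂ,
      binom (A₀ * χ) χ * binom (A₁ * χ) (B₁ * χ) * binom (A₂ * χ) (B₂ * χ) * χ x

/-- Finite-field Appell series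
`F₂(A;B,B';C,C';x,y) = ε(xy)·(BB'CC')(-1)·∑_{u,v} B(u)B'(v)(B̄C)(1-u)(B̄'C')(1-v)·Ā(1-ux-vy)`. -/
noncomputable def appellF2 {F : Type*} [Field F] [Fintype F]
    (A B B' C C' : MulChar F ℂ) (x y : F) : ℂ :=
  (1 : MulChar F ℂ) (x * y) * (B * B' * C * C') (-1) *
    ∑ u : F, ∑ v : F,
      B u * B' v * (B⁻¹ * C) (1 - u) * (B'⁻¹ * C') (1 - v) * A⁻¹ (1 - u * x - v * y)

open scoped Classical in
/-- `δ(x) = 1` if `x = 0`, and `0` otherwise. -/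
noncomputable def deltaF {F : Type*} [Field F] (x : F) : ℂ :=
  if x = 0 then 1 else 0

open scoped Classical in
/-- `δ(χ) = 1` if `χ = ε` (the trivial character), and `0` otherwise. -/
noncomputable def deltaChar {F : Type*} [Field F] [Fintype F] (χ : MulChar F ℂ) : ℂ :=
  if χ = 1 then 1 else 0

section Aux
variable {F : Type*} [Field F] [Fintype F]

variable {F : Type*} [Field F] [Fintype F]

lemma neZero_exp : NeZero ((Monoid.exponent Fˣ : ℂ)) :=
  ⟨by exact_mod_cast (Monoid.neZero_exponent_of_finite (G := Fˣ)).out⟩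

open scoped Classical in
lemma sum_mulChar_apply (a : F) :
    ∑ θ : MulChar F ℂ, θ a = if a = 1 then ((Fintype.card F : ℂ) - 1) else 0 := by
  classical
  have := @neZero_exp F _ _
  by_cases ha : a = 1
  · subst ha
    simp only [MulChar.map_one, Finset.sum_const, card_univ, nsmul_eq_mul, mul_one]
    have h1 : Fintype.card (MulChar F ℂ) = Fintype.card F - 1 := by
      rw [← Nat.card_eq_fintype_card, MulChar.card_eq_card_units_of_hasEnoughRootsOfUnity,
        Nat.card_eq_fintype_card, Fintype.card_units]
    rw [h1, Nat.cast_sub Fintype.card_pos, Nat.cast_one, if_pos trivial]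
  · rw [if_neg ha]
    by_cases h0 : a = 0
    · subst h0
      exact Finset.sum_eq_zero fun θ _ => θ.map_nonunit (by simp)
    · obtain ⟨χ, hχ⟩ := MulChar.exists_apply_ne_one_of_hasEnoughRootsOfUnity F ℂ ha
      have key : χ a * ∑ θ : MulChar F ℂ, θ a = ∑ θ : MulChar F ℂ, θ a := by
        rw [Finset.mul_sum]
        exact Fintype.sum_bijective (fun θ => χ * θ)
          (Group.mulLeft_bijective χ) _ _ (fun θ => (MulChar.mul_apply χ θ a).symm)
      have h2 : (χ a - 1) * ∑ θ : MulChar F ℂ, θ a = 0 := by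
        rw [sub_mul, one_mul, key, sub_self]
      rcases mul_eq_zero.mp h2 with h | h
      · exact absurd (sub_eq_zero.mp h) hχ
      · exact h

open scoped Classical in
lemma one_apply_ite (z : F) : (1 : MulChar F ℂ) z = if z = 0 then 0 else 1 := by
  split_ifs with h
  · subst h; exact MulChar.map_nonunit _ (by simp)
  · exact MulChar.one_apply (isUnit_iff_ne_zero.mpr h)

lemma mul_inv_apply (χ : MulChar F ℂ) (z : F) :
    χ z * χ⁻¹ z = (1 : MulChar F ℂ) z := by
  rw [← MulChar.mul_apply, mul_inv_cancel]

open scoped Classical in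
lemma claimA (χ : MulChar F ℂ) (u t : F) :
    ∑ w : F, χ w *
        (if w * (1 - w)⁻¹ * u * ((1 - u)⁻¹ * t) = 1 then ((Fintype.card F : ℂ) - 1) else 0)
      = ((Fintype.card F : ℂ) - 1) *
          ((1 : MulChar F ℂ) (u * t) * (χ (1 - u) * χ⁻¹ (1 - u * (1 - t)))) := by
  classical
  by_cases hu : u = 0
  · subst hu
    rw [Finset.sum_eq_zero fun w _ => by rw [if_neg (by simp), mul_zero]]
    simp [one_apply_ite]
  by_cases ht0 : t = 0
  · subst ht0
    rw [Finset.sum_eq_zero fun w _ => by rw [if_neg (by simp), mul_zero]]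
    simp [one_apply_ite]
  by_cases hu1 : u = 1
  · subst hu1
    rw [Finset.sum_eq_zero fun w _ => by rw [if_neg (by simp), mul_zero]]
    simp [sub_self, MulChar.map_zero]
  have h1u : (1 : F) - u ≠ 0 := sub_ne_zero.mpr (fun h => hu1 h.symm)
  by_cases hs : 1 - u * (1 - t) = 0
  · rw [Finset.sum_eq_zero, hs, MulChar.map_zero, mul_zero, mul_zero, mul_zero]
    intro w _
    rw [if_neg, mul_zero]
    intro hcond
    by_cases hw : (1 : F) - w = 0
    · rw [hw, inv_zero] at hcond
      simp at hcond
    · have h' : w * u * t = (1 - w) * (1 - u) := by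
        have h2 : w * u * t = w * (1 - w)⁻¹ * u * ((1 - u)⁻¹ * t) * ((1 - w) * (1 - u)) := by
          field_simp
        rw [hcond, one_mul] at h2
        exact h2
      have h3 : (1 : F) - u = w * (1 - u * (1 - t)) := by linear_combination -h'
      rw [hs, mul_zero] at h3
      exact h1u h3
  · -- main case
    rw [Fintype.sum_eq_single ((1 - u) / (1 - u * (1 - t)))]
    · have hw0 : (1 : F) - (1 - u) / (1 - u * (1 - t)) = u * t / (1 - u * (1 - t)) := by
        field_simp
        ring
      have hcondpos : (1 - u) / (1 - u * (1 - t)) * (1 - (1 - u) / (1 - u * (1 - t)))⁻¹ * u *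
          ((1 - u)⁻¹ * t) = 1 := by
        rw [hw0]
        field_simp
      have hε : (1 : MulChar F ℂ) (u * t) = 1 :=
        MulChar.one_apply (isUnit_iff_ne_zero.mpr (mul_ne_zero hu ht0))
      have hχ : χ ((1 - u) / (1 - u * (1 - t))) = χ (1 - u) * χ⁻¹ (1 - u * (1 - t)) := by
        rw [div_eq_mul_inv, map_mul, MulChar.inv_apply']
      rw [if_pos hcondpos, hχ, hε]
      ring
    · intro b hb
      rw [if_neg, mul_zero]
      intro hcond
      apply hb
      by_cases hw : (1 : F) - b = 0
      · rw [hw, inv_zero] at hcond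
        simp at hcond
      · have h' : b * u * t = (1 - b) * (1 - u) := by
          have h2 : b * u * t = b * (1 - b)⁻¹ * u * ((1 - u)⁻¹ * t) * ((1 - b) * (1 - u)) := by
            field_simp
          rw [hcond, one_mul] at h2
          exact h2
        have h3 : (1 : F) - u = b * (1 - u * (1 - t)) := by linear_combination -h'
        rw [eq_div_iff hs]
        exact h3.symm
end Aux

lemma step1 {F : Type*} [Field F] [Fintype F] (A B B' C C' : MulChar F ℂ) (x y t : F)
    (θ : MulChar F ℂ) :
    binom (B * C⁻¹ * θ) θ * appellF2 A (B * θ) B' C C' x y * θ t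
      = ∑ u : F, ∑ v : F, ∑ w : F,
          (1 : MulChar F ℂ) (x * y) * (B * B' * C * C') (-1) *
            ((B * C⁻¹) w * (B u * ((B⁻¹ * C) (1 - u) *
              (B' v * ((B'⁻¹ * C') (1 - v) * A⁻¹ (1 - u * x - v * y)))))) *
          θ (w * (1 - w)⁻¹ * u * ((1 - u)⁻¹ * t)) := by
  simp only [binom, appellF2, Finset.mul_sum, Finset.sum_mul]
  refine Finset.sum_congr rfl fun u _ => Finset.sum_congr rfl fun v _ =>
    Finset.sum_congr rfl fun w _ => ?_
  have hθ : θ (-1) * θ (-1) * (θ w * (θ (1 - w)⁻¹ * (θ u * (θ (1 - u)⁻¹ * θ t))))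
      = θ (w * (1 - w)⁻¹ * u * ((1 - u)⁻¹ * t)) := by
    simp only [← map_mul]
    congr 1
    ring
  rw [← hθ]
  simp only [MulChar.mul_apply, MulChar.inv_apply']
  ring

/-- a generating function for F₂ in the parameter `B`. -/
theorem appellF2_generating_B {F : Type*} [Field F] [Fintype F]
    (A B B' C C' : MulChar F ℂ) (x y t : F) (hx : x ≠ 1) (ht : t ≠ 1) :
    ((Fintype.card F : ℂ) - 1)⁻¹ *
        ∑ θ : MulChar F ℂ,
          binom (B * C⁻¹ * θ) θ * appellF2 A (B * θ) B' C C' x y * θ t =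
      (1 : MulChar F ℂ) t * B⁻¹ (1 - t) * appellF2 A B B' C C' (x / (1 - t)) y -
      (B⁻¹ * C) (-t) * (1 : MulChar F ℂ) x * A⁻¹ (1 - x) *
        gauss2F1 A B' C' (y / (1 - x)) := by
  classical
  have h1t : (1 : F) - t ≠ 0 := sub_ne_zero.mpr (fun h => ht h.symm)
  have h1x : (1 : F) - x ≠ 0 := sub_ne_zero.mpr (fun h => hx h.symm)
  have hq : ((Fintype.card F : ℂ) - 1) ≠ 0 := by
    intro h
    have h1 : (Fintype.card F : ℂ) = 1 := by linear_combination h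
    have h2 : Fintype.card F = 1 := by exact_mod_cast h1
    have := Fintype.one_lt_card (α := F)
    omega
  -- Step A : collapse the character sum
  have stepA : ((Fintype.card F : ℂ) - 1)⁻¹ *
      ∑ θ : MulChar F ℂ, binom (B * C⁻¹ * θ) θ * appellF2 A (B * θ) B' C C' x y * θ t
      = ∑ u : F, ∑ v : F, (1 : MulChar F ℂ) (x * y) * (B * B' * C * C') (-1) *
          ((1 : MulChar F ℂ) (u * t) * ((1 : MulChar F ℂ) (1 - u) *
            ((B⁻¹ * C) (1 - u * (1 - t)) * (B u *
              (B' v * ((B'⁻¹ * C') (1 - v) * A⁻¹ (1 - u * x - v * y))))))) := by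
    rw [Finset.sum_congr rfl fun θ _ => step1 A B B' C C' x y t θ]
    rw [Finset.sum_comm, Finset.mul_sum]
    refine Finset.sum_congr rfl fun u _ => ?_
    rw [Finset.sum_comm, Finset.mul_sum]
    refine Finset.sum_congr rfl fun v _ => ?_
    rw [Finset.sum_comm]
    have h1 : ∀ w : F, (∑ θ : MulChar F ℂ,
        (1 : MulChar F ℂ) (x * y) * (B * B' * C * C') (-1) *
            ((B * C⁻¹) w * (B u * ((B⁻¹ * C) (1 - u) *
              (B' v * ((B'⁻¹ * C') (1 - v) * A⁻¹ (1 - u * x - v * y)))))) *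
          θ (w * (1 - w)⁻¹ * u * ((1 - u)⁻¹ * t)))
        = ((1 : MulChar F ℂ) (x * y) * (B * B' * C * C') (-1) *
            (B u * ((B⁻¹ * C) (1 - u) *
              (B' v * ((B'⁻¹ * C') (1 - v) * A⁻¹ (1 - u * x - v * y)))))) *
          ((B * C⁻¹) w * (if w * (1 - w)⁻¹ * u * ((1 - u)⁻¹ * t) = 1
            then ((Fintype.card F : ℂ) - 1) else 0)) := by
      intro w
      rw [← Finset.mul_sum, sum_mulChar_apply]
      ring
    rw [Finset.sum_congr rfl fun w _ => h1 w, ← Finset.mul_sum, claimA (B * C⁻¹) u t]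
    have hBCinv : (B * C⁻¹)⁻¹ = B⁻¹ * C := by rw [mul_inv, inv_inv]
    rw [hBCinv]
    have hcancel : ∀ a b : ℂ, ((Fintype.card F : ℂ) - 1)⁻¹ *
        (a * (((Fintype.card F : ℂ) - 1) * b)) = a * b := fun a b => by
      field_simp
    rw [hcancel]
    have hone : (B * C⁻¹) (1 - u) * (B⁻¹ * C) (1 - u) = (1 : MulChar F ℂ) (1 - u) := by
      rw [← MulChar.mul_apply]
      congr 1
      rw [mul_mul_mul_comm, mul_inv_cancel, inv_mul_cancel, one_mul]
    linear_combination ((1 : MulChar F ℂ) (x * y) * (B * B' * C * C') (-1) *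
      ((1 : MulChar F ℂ) (u * t) * ((B⁻¹ * C) (1 - u * (1 - t)) * (B u *
        (B' v * ((B'⁻¹ * C') (1 - v) * A⁻¹ (1 - u * x - v * y))))))) * hone
  rw [stepA]
  -- Step B : substitution u = p / (1 - t)
  have hbij : Function.Bijective (fun p : F => p * (1 - t)⁻¹) :=
    mulRight_bijective₀ ((1 - t)⁻¹) (inv_ne_zero h1t)
  have hsub : (∑ p : F, ∑ v : F, (1 : MulChar F ℂ) (x * y) * (B * B' * C * C') (-1) *
          ((1 : MulChar F ℂ) (p * (1 - t)⁻¹ * t) * ((1 : MulChar F ℂ) (1 - p * (1 - t)⁻¹) *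
            ((B⁻¹ * C) (1 - p * (1 - t)⁻¹ * (1 - t)) * (B (p * (1 - t)⁻¹) *
              (B' v * ((B'⁻¹ * C') (1 - v) * A⁻¹ (1 - p * (1 - t)⁻¹ * x - v * y))))))))
      = ∑ u : F, ∑ v : F, (1 : MulChar F ℂ) (x * y) * (B * B' * C * C') (-1) *
          ((1 : MulChar F ℂ) (u * t) * ((1 : MulChar F ℂ) (1 - u) *
            ((B⁻¹ * C) (1 - u * (1 - t)) * (B u *
              (B' v * ((B'⁻¹ * C') (1 - v) * A⁻¹ (1 - u * x - v * y))))))) :=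
    Fintype.sum_bijective (fun p : F => p * (1 - t)⁻¹) hbij _ _ (fun p => rfl)
  rw [← hsub]
  -- pointwise rewrite to the "N" form with the split indicator
  have pointN : ∀ p v : F, (1 : MulChar F ℂ) (x * y) * (B * B' * C * C') (-1) *
          ((1 : MulChar F ℂ) (p * (1 - t)⁻¹ * t) * ((1 : MulChar F ℂ) (1 - p * (1 - t)⁻¹) *
            ((B⁻¹ * C) (1 - p * (1 - t)⁻¹ * (1 - t)) * (B (p * (1 - t)⁻¹) *
              (B' v * ((B'⁻¹ * C') (1 - v) * A⁻¹ (1 - p * (1 - t)⁻¹ * x - v * y)))))))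
      = ((1 : MulChar F ℂ) t * (B⁻¹ (1 - t) * ((1 : MulChar F ℂ) (x * y) *
          ((B * B' * C * C') (-1) * ((B⁻¹ * C) (1 - p) * (B p *
            (B' v * ((B'⁻¹ * C') (1 - v) * A⁻¹ (1 - p * (x / (1 - t)) - v * y)))))))))
        - (if p = 1 - t
            then (1 : MulChar F ℂ) t * (B⁻¹ (1 - t) * ((1 : MulChar F ℂ) (x * y) *
              ((B * B' * C * C') (-1) * ((B⁻¹ * C) (1 - p) * (B p *
                (B' v * ((B'⁻¹ * C') (1 - v) * A⁻¹ (1 - p * (x / (1 - t)) - v * y))))))))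
            else 0) := by
    intro p v
    by_cases hp1 : p = 1 - t
    · rw [if_pos hp1, hp1, mul_inv_cancel₀ h1t]
      simp [one_apply_ite]
    · rw [if_neg hp1, sub_zero]
      by_cases hp0 : p = 0
      · rw [hp0]
        simp [one_apply_ite, MulChar.map_zero]
      · have e1 : 1 - p * (1 - t)⁻¹ * (1 - t) = 1 - p := by field_simp
        have e2 : 1 - p * (1 - t)⁻¹ * x - v * y = 1 - p * (x / (1 - t)) - v * y := by
          rw [div_eq_mul_inv]; ring
        have e3 : B (p * (1 - t)⁻¹) = B p * B⁻¹ (1 - t) := by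
          rw [map_mul, MulChar.inv_apply']
        have e4 : (1 : MulChar F ℂ) (p * (1 - t)⁻¹ * t) = (1 : MulChar F ℂ) t := by
          rw [map_mul, map_mul, MulChar.one_apply (isUnit_iff_ne_zero.mpr hp0),
            MulChar.one_apply (isUnit_iff_ne_zero.mpr (inv_ne_zero h1t)), one_mul, one_mul]
        have h1tp : (1 : F) - t - p ≠ 0 := by
          intro h
          exact hp1 (by linear_combination -h)
        have e5 : (1 : MulChar F ℂ) (1 - p * (1 - t)⁻¹) = 1 := by
          have harg : (1 : F) - p * (1 - t)⁻¹ = (1 - t - p) * (1 - t)⁻¹ := by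
            field_simp
          rw [harg, map_mul, MulChar.one_apply (isUnit_iff_ne_zero.mpr h1tp),
            MulChar.one_apply (isUnit_iff_ne_zero.mpr (inv_ne_zero h1t)), one_mul]
        rw [e1, e2, e3, e4, e5]
        ring
  rw [Finset.sum_congr rfl fun p _ => Finset.sum_congr rfl fun v _ => pointN p v]
  simp only [Finset.sum_sub_distrib]
  congr 1
  · -- first term : the shifted Appell series
    rw [appellF2]
    have hexy : (1 : MulChar F ℂ) (x / (1 - t) * y) = (1 : MulChar F ℂ) (x * y) := by
      have harg : x / (1 - t) * y = x * y * (1 - t)⁻¹ := by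
        rw [div_eq_mul_inv]; ring
      rw [harg, map_mul, MulChar.one_apply (isUnit_iff_ne_zero.mpr (inv_ne_zero h1t)), mul_one]
    rw [hexy]
    simp only [Finset.mul_sum]
    exact Finset.sum_congr rfl fun p _ => Finset.sum_congr rfl fun v _ => by ring
  · -- second term : the Gauss 2F1
    have hpull : ∀ p : F, (∑ v : F, if p = 1 - t
          then (1 : MulChar F ℂ) t * (B⁻¹ (1 - t) * ((1 : MulChar F ℂ) (x * y) *
            ((B * B' * C * C') (-1) * ((B⁻¹ * C) (1 - p) * (B p *
              (B' v * ((B'⁻¹ * C') (1 - v) * A⁻¹ (1 - p * (x / (1 - t)) - v * y))))))))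
          else 0)
        = (if p = 1 - t
          then ∑ v : F, (1 : MulChar F ℂ) t * (B⁻¹ (1 - t) * ((1 : MulChar F ℂ) (x * y) *
            ((B * B' * C * C') (-1) * ((B⁻¹ * C) (1 - p) * (B p *
              (B' v * ((B'⁻¹ * C') (1 - v) * A⁻¹ (1 - p * (x / (1 - t)) - v * y))))))))
          else 0) := by
      intro p
      split_ifs <;> simp
    rw [Finset.sum_congr rfl fun p _ => hpull p, Finset.sum_ite_eq' univ (1 - t) _,
      if_pos (mem_univ _)]
    rw [gauss2F1]
    have ea : (1 : F) - (1 - t) = t := by ring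
    rw [ea]
    have eb : ∀ v : F, (1 : F) - (1 - t) * (x / (1 - t)) - v * y = 1 - x - v * y := by
      intro v; field_simp
    simp only [Finset.mul_sum]
    refine Finset.sum_congr rfl fun v _ => ?_
    rw [eb v]
    have hA : A⁻¹ (1 - x) * A⁻¹ (1 - y / (1 - x) * v) = A⁻¹ (1 - x - v * y) := by
      rw [← map_mul]
      congr 1
      field_simp
    have hBt : B (1 - t) * B⁻¹ (1 - t) = 1 := by
      rw [mul_inv_apply, MulChar.one_apply (isUnit_iff_ne_zero.mpr h1t)]
    have hmt : (B⁻¹ * C) (-t) = (B⁻¹ * C) (-1) * (B⁻¹ * C) t := by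
      rw [← map_mul]
      congr 1
      ring
    have hεt : (1 : MulChar F ℂ) t * (B⁻¹ * C) t = (B⁻¹ * C) t := by
      rw [← MulChar.mul_apply, one_mul]
    have hxy : (1 : MulChar F ℂ) (x * y) = (1 : MulChar F ℂ) x * (1 : MulChar F ℂ) y :=
      map_mul _ x y
    have hyx : (1 : MulChar F ℂ) (y / (1 - x)) = (1 : MulChar F ℂ) y := by
      have harg : y / (1 - x) = y * (1 - x)⁻¹ := by rw [div_eq_mul_inv]
      rw [harg, map_mul, MulChar.one_apply (isUnit_iff_ne_zero.mpr (inv_ne_zero h1x)), mul_one]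
    have hneg : ((-1 : F))⁻¹ = -1 := by norm_num
    have hm : (B * B' * C * C') (-1 : F) = (B⁻¹ * C) (-1) * (B' * C') (-1) := by
      simp only [MulChar.mul_apply, MulChar.inv_apply', hneg]
      ring
    linear_combination
      (B⁻¹ (1 - t) * ((1 : MulChar F ℂ) (x * y) * ((B * B' * C * C') (-1) * (B (1 - t) *
        (B' v * ((B'⁻¹ * C') (1 - v) * A⁻¹ (1 - x - v * y))))))) * hεt
      + ((1 : MulChar F ℂ) (x * y) * ((B * B' * C * C') (-1) * ((B⁻¹ * C) t *
        (B' v * ((B'⁻¹ * C') (1 - v) * A⁻¹ (1 - x - v * y)))))) * hBt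
      + ((B⁻¹ * C) t * ((1 : MulChar F ℂ) x * ((1 : MulChar F ℂ) y *
        (B' v * ((B'⁻¹ * C') (1 - v) * A⁻¹ (1 - x - v * y)))))) * hm
      + ((B⁻¹ * C) t * ((B * B' * C * C') (-1) *
        (B' v * ((B'⁻¹ * C') (1 - v) * A⁻¹ (1 - x - v * y))))) * hxy
      - ((1 : MulChar F ℂ) x * ((1 : MulChar F ℂ) y * ((B' * C') (-1) *
        (B' v * ((B'⁻¹ * C') (1 - v) * A⁻¹ (1 - x - v * y)))))) * hmt
      - ((B⁻¹ * C) (-t) * ((1 : MulChar F ℂ) x * ((1 : MulChar F ℂ) y * ((B' * C') (-1) *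
        (B' v * (B'⁻¹ * C') (1 - v)))))) * hA
      - ((B⁻¹ * C) (-t) * ((1 : MulChar F ℂ) x * ((B' * C') (-1) *
        (B' v * ((B'⁻¹ * C') (1 - v) * (A⁻¹ (1 - x) * A⁻¹ (1 - y / (1 - x) * v))))))) * hyx
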